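/- Let u: ℤ → ℂ be a finitely supported 1D filter with û(0) = 1, and let a^{2D} be the 2D filter defined by â^{2D}(ω₁,ω₂) = ½[û(ω₁+ω₂) + û(ω₁−ω₂)e^{−iω₂}]. Then a^{2D} is D₄-symmetric about the point (1/2, 1/2) if and only if u(1−k) = u(k) for all k ∈ ℤ. -/

import Mathlib

open Complex Real

/-- Fourier series of a finitely supported 1D filter. -/
noncomputable def fhat1 (u : ℤ → ℂ) (ω : ℝ) : ℂ :=
  ∑ᶠ k : ℤ, u k * Complex.exp (-(Complex.I) * (k : ℂ) * (ω : ℂ))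

/-- Fourier series of a finitely supported 2D filter. -/
noncomputable def fhat2 (a : ℤ × ℤ → ℂ) (ω : ℝ × ℝ) : ℂ :=
  ∑ᶠ k : ℤ × ℤ, a k * Complex.exp (-(Complex.I) * ((k.1 : ℂ) * (ω.1 : ℂ) + (k.2 : ℂ) * (ω.2 : ℂ)))

/-- The dihedral group `D₄` of eight 2×2 integer matrices (viewed over ℝ). -/
def D4 : Set (Matrix (Fin 2) (Fin 2) ℝ) :=
  {!![1, 0; 0, 1], !![-1, 0; 0, -1], !![1, 0; 0, -1], !![-1, 0; 0, 1],
   !![0, 1; 1, 0], !![0, -1; -1, 0], !![0, 1; -1, 0], !![0, -1; 1, 0]}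

/-- `a` is `D₄`-symmetric about the point `c`: `a(E(k−c)+c) = a(k)` for all `k ∈ ℤ²`, `E ∈ D₄`. -/
def D4Symm (a : ℤ × ℤ → ℂ) (c : ℝ × ℝ) : Prop :=
  ∀ E ∈ D4, ∀ k k' : ℤ × ℤ,
    (![(k'.1 : ℝ), (k'.2 : ℝ)]
      = E.mulVec ![(k.1 : ℝ) - c.1, (k.2 : ℝ) - c.2] + ![c.1, c.2]) →
    a k' = a k

noncomputable def chi (k : ℤ × ℤ) : Multiplicative (ℝ × ℝ) →* ℂ where
  toFun ω := Complex.exp (-(Complex.I) * ((k.1 : ℂ) * ((Multiplicative.toAdd ω).1 : ℂ)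
      + (k.2 : ℂ) * ((Multiplicative.toAdd ω).2 : ℂ)))
  map_one' := by simp
  map_mul' x y := by
    simp only [← Complex.exp_add]
    congr 1
    have hx : Multiplicative.toAdd (x * y) = Multiplicative.toAdd x + Multiplicative.toAdd y := rfl
    rw [hx]
    show -(Complex.I) * (_ * ((Multiplicative.toAdd x).1 + (Multiplicative.toAdd y).1 : ℝ) + _ * ((Multiplicative.toAdd x).2 + (Multiplicative.toAdd y).2 : ℝ)) = _
    push_cast
    ring

lemma exp_lin_eq {m n : ℤ} (h : ∀ t : ℝ, Complex.exp (-(Complex.I) * ((m:ℂ) * (t:ℂ))) = Complex.exp (-(Complex.I) * ((n:ℂ) * (t:ℂ)))) : m = n := by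
  by_contra hmn
  have hd : (m - n : ℤ) ≠ 0 := sub_ne_zero.mpr hmn
  have hdC : ((m - n : ℤ) : ℂ) ≠ 0 := Int.cast_ne_zero.mpr hd
  have hdR : ((m - n : ℤ) : ℝ) ≠ 0 := Int.cast_ne_zero.mpr hd
  have ht := h (Real.pi / ((m - n : ℤ) : ℝ))
  rw [Complex.exp_eq_exp_iff_exists_int] at ht
  obtain ⟨z, hz⟩ := ht
  have hI : Complex.I ≠ 0 := Complex.I_ne_zero
  set t : ℂ := ((Real.pi / ((m - n : ℤ) : ℝ) : ℝ) : ℂ) with htdef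
  have hz' : (m:ℂ) * t = (n:ℂ) * t - 2 * Real.pi * z := by
    have h2 : -Complex.I * ((m:ℂ)*t) = -Complex.I * ((n:ℂ)*t - 2*Real.pi*z) := by
      rw [hz]; ring
    exact mul_left_cancel₀ (neg_ne_zero.mpr Complex.I_ne_zero) h2
  have htv : t = (Real.pi : ℂ) / ((m:ℂ) - (n:ℂ)) := by rw [htdef]; push_cast; ring
  have hsub : ((m:ℂ) - (n:ℂ)) ≠ 0 := by push_cast at hdC; exact hdC
  have hpi : (Real.pi : ℂ) ≠ 0 := by exact_mod_cast Real.pi_ne_zero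
  have hfin : (Real.pi : ℂ) = -(2 * Real.pi * z) := by
    have : ((m:ℂ) - (n:ℂ)) * t = -(2 * Real.pi * z) := by linear_combination hz'
    rw [htv] at this
    field_simp at this
    linear_combination (Real.pi : ℂ) * this
  have h1 : (1 : ℂ) = -(2*z) := by
    have := mul_left_cancel₀ hpi (by linear_combination hfin : (Real.pi:ℂ) * 1 = (Real.pi:ℂ) * (-(2*z)))
    exact this
  have : (1 : ℤ) = -(2*z) := by exact_mod_cast h1
  omega

lemma chi_inj : Function.Injective chi := by
  intro k l h
  have hev : ∀ ω : ℝ × ℝ, chi k (Multiplicative.ofAdd ω) = chi l (Multiplicative.ofAdd ω) := by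
    intro ω; rw [h]
  have h1 : k.1 = l.1 := by
    apply exp_lin_eq
    intro t
    have := hev (t, 0)
    simpa [chi] using this
  have h2 : k.2 = l.2 := by
    apply exp_lin_eq
    intro t
    have := hev (0, t)
    simpa [chi] using this
  exact Prod.ext h1 h2

lemma fourier_unique (b : ℤ × ℤ → ℂ) (hb : (Function.support b).Finite)
    (h : ∀ ω : ℝ × ℝ, fhat2 b ω = 0) : ∀ k, b k = 0 := by
  classical
  set s := hb.toFinset with hs
  have hsum : ∀ ω : Multiplicative (ℝ × ℝ), ∑ j ∈ s, b j * chi j ω = 0 := by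
    intro ω
    have h0 := h (Multiplicative.toAdd ω)
    rw [fhat2] at h0
    have heq : (∑ᶠ j : ℤ × ℤ, b j * chi j ω)
        = ∑ j ∈ s, b j * chi j ω := by
      apply finsum_eq_finset_sum_of_support_subset
      intro x hx
      have : b x ≠ 0 := left_ne_zero_of_mul hx
      simpa [hs] using this
    rw [← heq]
    exact h0
  have hfun : ∑ j ∈ s, (b j) • ((chi j : Multiplicative (ℝ × ℝ) → ℂ)) = 0 := by
    funext ω
    simpa [Finset.sum_apply] using hsum ω
  have hli := (linearIndependent_monoidHom (Multiplicative (ℝ × ℝ)) ℂ).comp chi chi_inj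
  have key := linearIndependent_iff'.1 hli s b hfun
  intro k
  by_cases hk : k ∈ s
  · exact key k hk
  · by_contra hbk
    exact hk (by simpa [hs] using hbk)

noncomputable def a0 (u : ℤ → ℂ) : ℤ × ℤ → ℂ := fun k =>
  (if k.2 = k.1 then u k.1 / 2 else 0) + (if k.2 = 1 - k.1 then u k.1 / 2 else 0)

lemma a0_supp (u : ℤ → ℂ) (hufin : (Function.support u).Finite) :
    (Function.support (a0 u)).Finite := by
  apply Set.Finite.subset (((hufin.image (fun j => (j, j))).union
    (hufin.image (fun j => (j, 1 - j)))))
  intro x hx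
  simp only [Function.mem_support, a0] at hx
  have hu : u x.1 ≠ 0 := by intro h0; apply hx; simp [h0]
  have hpq : x.2 = x.1 ∨ x.2 = 1 - x.1 := by
    by_contra hc; push_neg at hc; apply hx; simp [hc.1, hc.2]
  rcases hpq with h | h
  · exact Or.inl ⟨x.1, hu, Prod.ext rfl h.symm⟩
  · exact Or.inr ⟨x.1, hu, Prod.ext rfl h.symm⟩

lemma fhat2_a0 (u : ℤ → ℂ) (hufin : (Function.support u).Finite) (ω : ℝ × ℝ) :
    fhat2 (a0 u) ω = (1 / 2 : ℂ) * (fhat1 u (ω.1 + ω.2)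
      + fhat1 u (ω.1 - ω.2) * Complex.exp (-(Complex.I) * (ω.2 : ℂ))) := by
  classical
  set S := hufin.toFinset with hS
  have hf1 : ∀ w : ℝ, fhat1 u w = ∑ j ∈ S, u j * Complex.exp (-(Complex.I) * (j : ℂ) * (w : ℂ)) := by
    intro w
    apply finsum_eq_finset_sum_of_support_subset
    intro x hx
    have : u x ≠ 0 := left_ne_zero_of_mul hx
    simpa [hS] using this
  set Td := S.image (fun j : ℤ => (j, j)) with hTd
  set Ta := S.image (fun j : ℤ => (j, 1 - j)) with hTa
  have hmain : fhat2 (a0 u) ω = ∑ k ∈ Td ∪ Ta,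
      a0 u k * Complex.exp (-(Complex.I) * ((k.1 : ℂ) * (ω.1 : ℂ) + (k.2 : ℂ) * (ω.2 : ℂ))) := by
    apply finsum_eq_finset_sum_of_support_subset
    intro x hx
    have hax : a0 u x ≠ 0 := left_ne_zero_of_mul hx
    simp only [a0] at hax
    have hu : u x.1 ≠ 0 := by intro h0; apply hax; simp [h0]
    have hpq : x.2 = x.1 ∨ x.2 = 1 - x.1 := by
      by_contra hc; push_neg at hc; apply hax; simp [hc.1, hc.2]
    simp only [Finset.coe_union, Set.mem_union, hTd, hTa, Finset.coe_image, Set.mem_image,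
      Finset.mem_coe, hS, Set.Finite.mem_toFinset, Function.mem_support]
    rcases hpq with h | h
    · exact Or.inl ⟨x.1, hu, Prod.ext rfl h.symm⟩
    · exact Or.inr ⟨x.1, hu, Prod.ext rfl h.symm⟩
  rw [hmain]
  simp only [a0, add_mul, Finset.sum_add_distrib]
  have hd : ∑ k ∈ Td ∪ Ta, (if k.2 = k.1 then u k.1 / 2 else 0)
        * Complex.exp (-(Complex.I) * ((k.1 : ℂ) * (ω.1 : ℂ) + (k.2 : ℂ) * (ω.2 : ℂ)))
      = ∑ j ∈ S, u j / 2 * Complex.exp (-(Complex.I) * ((j : ℂ) * (ω.1 : ℂ) + (j : ℂ) * (ω.2 : ℂ))) := by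
    rw [← Finset.sum_subset (Finset.subset_union_left (s₂ := Ta))]
    · rw [hTd, Finset.sum_image (by intro x _ y _ h; exact (Prod.ext_iff.mp h).1)]
      simp
    · intro x hx hxd
      have : x.2 ≠ x.1 := by
        intro h
        exact hxd (by rw [hTd]; simp only [Finset.mem_image]
                      exact ⟨x.1, by
                        rcases Finset.mem_union.mp hx with h' | h'
                        · simp only [hTd, Finset.mem_image] at h'
                          obtain ⟨j, hj, hje⟩ := h'
                          cases hje; exact hj
                        · simp only [hTa, Finset.mem_image] at h'
                          obtain ⟨j, hj, hje⟩ := h'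
                          cases hje
                          omega
                        , Prod.ext rfl h.symm⟩)
      simp [this]
  have ha : ∑ k ∈ Td ∪ Ta, (if k.2 = 1 - k.1 then u k.1 / 2 else 0)
        * Complex.exp (-(Complex.I) * ((k.1 : ℂ) * (ω.1 : ℂ) + (k.2 : ℂ) * (ω.2 : ℂ)))
      = ∑ j ∈ S, u j / 2 * Complex.exp (-(Complex.I) * ((j : ℂ) * (ω.1 : ℂ) + ((1 - j : ℤ) : ℂ) * (ω.2 : ℂ))) := by
    rw [← Finset.sum_subset (Finset.subset_union_right (s₁ := Td))]
    · rw [hTa, Finset.sum_image (by intro x _ y _ h; exact (Prod.ext_iff.mp h).1)]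
      simp
    · intro x hx hxa
      have : x.2 ≠ 1 - x.1 := by
        intro h
        exact hxa (by rw [hTa]; simp only [Finset.mem_image]
                      exact ⟨x.1, by
                        rcases Finset.mem_union.mp hx with h' | h'
                        · simp only [hTd, Finset.mem_image] at h'
                          obtain ⟨j, hj, hje⟩ := h'
                          cases hje; exact hj
                        · simp only [hTa, Finset.mem_image] at h'
                          obtain ⟨j, hj, hje⟩ := h'
                          cases hje; exact hj
                        , Prod.ext rfl h.symm⟩)
      simp [this]
  rw [hd, ha, hf1, hf1, mul_add, Finset.mul_sum, Finset.sum_mul, Finset.mul_sum]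
  congr 1
  · apply Finset.sum_congr rfl
    intro j _
    have e1 : -(Complex.I) * ((j : ℂ) * (ω.1 : ℂ) + (j : ℂ) * (ω.2 : ℂ))
        = -(Complex.I) * (j : ℂ) * (((ω.1 + ω.2 : ℝ)) : ℂ) := by push_cast; ring
    rw [e1]; ring
  · apply Finset.sum_congr rfl
    intro j _
    have e2 : -(Complex.I) * ((j : ℂ) * (ω.1 : ℂ) + ((1 - j : ℤ) : ℂ) * (ω.2 : ℂ))
        = -(Complex.I) * (j : ℂ) * (((ω.1 - ω.2 : ℝ)) : ℂ) + -(Complex.I) * (ω.2 : ℂ) := by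
      push_cast; ring
    rw [e2, Complex.exp_add]; ring

lemma a_eq_a0 (u : ℤ → ℂ) (hufin : (Function.support u).Finite)
    (a : ℤ × ℤ → ℂ) (hafin : (Function.support a).Finite)
    (hfa : ∀ ω : ℝ × ℝ, fhat2 a ω
      = (1 / 2 : ℂ) * (fhat1 u (ω.1 + ω.2)
          + fhat1 u (ω.1 - ω.2) * Complex.exp (-(Complex.I) * (ω.2 : ℂ)))) :
    ∀ k, a k = a0 u k := by
  classical
  have hbfin : (Function.support (fun k => a k - a0 u k)).Finite := by
    apply Set.Finite.subset (hafin.union (a0_supp u hufin))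
    intro x hx
    simp only [Function.mem_support] at hx
    by_contra hc
    simp only [Set.mem_union, Function.mem_support, not_or, not_not] at hc
    exact hx (by rw [hc.1, hc.2, sub_zero])
  have hzero : ∀ ω : ℝ × ℝ, fhat2 (fun k => a k - a0 u k) ω = 0 := by
    intro ω
    set T := hafin.toFinset ∪ (a0_supp u hufin).toFinset with hT
    have hsa : fhat2 a ω = ∑ k ∈ T, a k
        * Complex.exp (-(Complex.I) * ((k.1 : ℂ) * (ω.1 : ℂ) + (k.2 : ℂ) * (ω.2 : ℂ))) := by
      apply finsum_eq_finset_sum_of_support_subset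
      intro x hx
      have : a x ≠ 0 := left_ne_zero_of_mul hx
      simp [hT, this]
    have hs0 : fhat2 (a0 u) ω = ∑ k ∈ T, a0 u k
        * Complex.exp (-(Complex.I) * ((k.1 : ℂ) * (ω.1 : ℂ) + (k.2 : ℂ) * (ω.2 : ℂ))) := by
      apply finsum_eq_finset_sum_of_support_subset
      intro x hx
      have : a0 u x ≠ 0 := left_ne_zero_of_mul hx
      simp [hT, this]
    have hsb : fhat2 (fun k => a k - a0 u k) ω = ∑ k ∈ T, (a k - a0 u k)
        * Complex.exp (-(Complex.I) * ((k.1 : ℂ) * (ω.1 : ℂ) + (k.2 : ℂ) * (ω.2 : ℂ))) := by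
      apply finsum_eq_finset_sum_of_support_subset
      intro x hx
      have hne : a x - a0 u x ≠ 0 := left_ne_zero_of_mul hx
      have : a x ≠ 0 ∨ a0 u x ≠ 0 := by
        by_contra hc; push_neg at hc
        exact hne (by rw [hc.1, hc.2, sub_zero])
      rcases this with h | h <;> simp [hT, h]
    rw [hsb]
    simp only [sub_mul, Finset.sum_sub_distrib]
    rw [← hsa, ← hs0, hfa ω, fhat2_a0 u hufin ω, sub_self]
  have := fourier_unique _ hbfin hzero
  intro k
  have hk := this k
  simp only [sub_eq_zero] at hk
  exact hk

lemma a0_flip1 (u : ℤ → ℂ) (hs : ∀ k : ℤ, u (1 - k) = u k) (x y : ℤ) :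
    a0 u (1 - x, y) = a0 u (x, y) := by
  simp only [a0, hs x, show (1 : ℤ) - (1 - x) = x from by ring]
  exact add_comm _ _

lemma a0_flip2 (u : ℤ → ℂ) (x y : ℤ) : a0 u (x, 1 - y) = a0 u (x, y) := by
  simp only [a0]
  have c1 : ((1 - y : ℤ) = x) ↔ (y = 1 - x) := by omega
  have c2 : ((1 - y : ℤ) = 1 - x) ↔ (y = x) := by omega
  simp only [c1, c2]
  exact add_comm _ _

lemma a0_swap (u : ℤ → ℂ) (hs : ∀ k : ℤ, u (1 - k) = u k) (x y : ℤ) :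
    a0 u (y, x) = a0 u (x, y) := by
  simp only [a0]
  by_cases h1 : y = x
  · subst h1; ring
  · have h1' : ¬ x = y := fun h => h1 h.symm
    by_cases h2 : x = 1 - y
    · have h2' : y = 1 - x := by omega
      rw [if_neg h1', if_pos h2, if_neg h1, if_pos h2', h2', hs]
    · have h2' : ¬ y = 1 - x := by omega
      simp [h1, h1', h2, h2']

lemma icast (m n : ℤ) (h : (m : ℝ) = (n : ℝ)) : m = n := by exact_mod_cast h

lemma icast1 (m n : ℤ) (h : (m : ℝ) = 1 - (n : ℝ)) : m = 1 - n := by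
  have : (m : ℝ) = ((1 - n : ℤ) : ℝ) := by push_cast; linarith
  exact_mod_cast this

/-- `a^{2D}` is `D₄`-symmetric about `(1/2,1/2)` iff `u(1−k) = u(k)` for all `k`. -/
theorem stmt_9 (u : ℤ → ℂ) (hufin : (Function.support u).Finite) (hu0 : fhat1 u 0 = 1)
    (a : ℤ × ℤ → ℂ) (hafin : (Function.support a).Finite)
    (hfa : ∀ ω : ℝ × ℝ, fhat2 a ω
      = (1 / 2 : ℂ) * (fhat1 u (ω.1 + ω.2)
          + fhat1 u (ω.1 - ω.2) * Complex.exp (-(Complex.I) * (ω.2 : ℂ)))) :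
    D4Symm a (1 / 2, 1 / 2) ↔ ∀ k : ℤ, u (1 - k) = u k := by
  have ha := a_eq_a0 u hufin a hafin hfa
  constructor
  · intro hsym k
    have h5 : !![0, 1; 1, 0] ∈ D4 := by simp [D4]
    have key := hsym _ h5 (k, 1 - k) (1 - k, k) (by
      funext i
      fin_cases i <;>
        simp [Matrix.mulVec, dotProduct, Fin.sum_univ_two] <;> push_cast <;> ring)
    rw [ha, ha] at key
    have l1 : a0 u (1 - k, k) = u (1 - k) / 2 := by
      simp [a0, show ¬(k = 1 - k) from by omega, show (1:ℤ) - (1 - k) = k from by ring]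
    have l2 : a0 u (k, 1 - k) = u k / 2 := by
      simp [a0, show ¬((1:ℤ) - k = k) from by omega]
    rw [l1, l2] at key
    linear_combination 2 * key
  · intro hs E hE k k' hv
    rw [ha, ha]
    simp only [D4, Set.mem_insert_iff, Set.mem_singleton_iff] at hE
    have h0 := congrFun hv 0
    have h1 := congrFun hv 1
    rcases hE with rfl | rfl | rfl | rfl | rfl | rfl | rfl | rfl <;>
      simp only [Matrix.mulVec, dotProduct, Fin.sum_univ_two, Matrix.cons_val_zero,
        Matrix.cons_val_one, Matrix.head_cons, Matrix.cons_val', Matrix.empty_val',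
        Matrix.cons_val_fin_one, Matrix.head_fin_const, Pi.add_apply] at h0 h1
    · -- identity
      have e1 : k'.1 = k.1 := icast _ _ (by norm_num at h0 ⊢; linarith)
      have e2 : k'.2 = k.2 := icast _ _ (by norm_num at h1 ⊢; linarith)
      rw [show k' = (k.1, k.2) from Prod.ext e1 e2]
    · have e1 : k'.1 = 1 - k.1 := icast1 _ _ (by norm_num at h0 ⊢; linarith)
      have e2 : k'.2 = 1 - k.2 := icast1 _ _ (by norm_num at h1 ⊢; linarith)
      rw [show k' = (1 - k.1, 1 - k.2) from Prod.ext e1 e2, a0_flip1 u hs, a0_flip2]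
    · have e1 : k'.1 = k.1 := icast _ _ (by norm_num at h0 ⊢; linarith)
      have e2 : k'.2 = 1 - k.2 := icast1 _ _ (by norm_num at h1 ⊢; linarith)
      rw [show k' = (k.1, 1 - k.2) from Prod.ext e1 e2, a0_flip2]
    · have e1 : k'.1 = 1 - k.1 := icast1 _ _ (by norm_num at h0 ⊢; linarith)
      have e2 : k'.2 = k.2 := icast _ _ (by norm_num at h1 ⊢; linarith)
      rw [show k' = (1 - k.1, k.2) from Prod.ext e1 e2, a0_flip1 u hs]
    · have e1 : k'.1 = k.2 := icast _ _ (by norm_num at h0 ⊢; linarith)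
      have e2 : k'.2 = k.1 := icast _ _ (by norm_num at h1 ⊢; linarith)
      rw [show k' = (k.2, k.1) from Prod.ext e1 e2, a0_swap u hs]
    · have e1 : k'.1 = 1 - k.2 := icast1 _ _ (by norm_num at h0 ⊢; linarith)
      have e2 : k'.2 = 1 - k.1 := icast1 _ _ (by norm_num at h1 ⊢; linarith)
      rw [show k' = (1 - k.2, 1 - k.1) from Prod.ext e1 e2, a0_flip1 u hs, a0_flip2,
        a0_swap u hs]
    · have e1 : k'.1 = k.2 := icast _ _ (by norm_num at h0 ⊢; linarith)
      have e2 : k'.2 = 1 - k.1 := icast1 _ _ (by norm_num at h1 ⊢; linarith)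
      rw [show k' = (k.2, 1 - k.1) from Prod.ext e1 e2, a0_flip2, a0_swap u hs]
    · have e1 : k'.1 = 1 - k.2 := icast1 _ _ (by norm_num at h0 ⊢; linarith)
      have e2 : k'.2 = k.1 := icast _ _ (by norm_num at h1 ⊢; linarith)
      rw [show k' = (1 - k.2, k.1) from Prod.ext e1 e2, a0_flip1 u hs, a0_swap u hs]
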